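/- Let p ≥ 4 and q ≥ 4, and let (j₁, j₂, i₁, i₂) be a connected abstract square bridge diagram of size (p, q) with intersection count κ = Σ_{i : Fin p} (j₂ i − j₁ i + 1). Then κ ≤ p·q − p. -/

import Mathlib

/-- An abstract square bridge diagram of size `(p, q)`: the `i`-th horizontal
segment has its two endpoints (corners) on the `j₁ i`-th and `j₂ i`-th vertical
segments, and the `j`-th vertical segment has its endpoints on the `i₁ j`-th and
`i₂ j`-th horizontal segments. -/
structure SquareBridgeDiagram (p q : ℕ) where
  j₁ : Fin p → Fin q
  j₂ : Fin p → Fin q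
  i₁ : Fin q → Fin p
  i₂ : Fin q → Fin p
  j₁_lt_j₂ : ∀ i, j₁ i < j₂ i
  i₁_lt_i₂ : ∀ j, i₁ j < i₂ j
  corner : ∀ i j, (j = j₁ i ∨ j = j₂ i) ↔ (i = i₁ j ∨ i = i₂ j)

/-- The intersection count `κ = Σ_i (j₂ i − j₁ i + 1)`: the number of pairs
`(i, j)` with `j₁ i ≤ j ≤ j₂ i`, i.e. how many of the `q` vertical lines meet
the `i`-th horizontal segment. -/
def SquareBridgeDiagram.kappa {p q : ℕ} (D : SquareBridgeDiagram p q) : ℕ :=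
  ∑ i : Fin p, ((D.j₂ i : ℕ) - (D.j₁ i : ℕ) + 1)

/-- The bipartite incidence graph of a square bridge diagram: the horizontal
segment `i` is adjacent to the vertical segment `j` exactly when the two
segments intersect, i.e. `j₁ i ≤ j ≤ j₂ i` and `i₁ j ≤ i ≤ i₂ j`. -/
def SquareBridgeDiagram.graph {p q : ℕ} (D : SquareBridgeDiagram p q) :
    SimpleGraph (Fin p ⊕ Fin q) where
  Adj x y :=
    match x, y with
    | Sum.inl i, Sum.inr j =>
        (D.j₁ i ≤ j ∧ j ≤ D.j₂ i) ∧ (D.i₁ j ≤ i ∧ i ≤ D.i₂ j)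
    | Sum.inr j, Sum.inl i =>
        (D.j₁ i ≤ j ∧ j ≤ D.j₂ i) ∧ (D.i₁ j ≤ i ∧ i ≤ D.i₂ j)
    | _, _ => False
  symm := by
    constructor
    intro x y h
    cases x <;> cases y <;> simp_all
  loopless := by
    constructor
    intro x h
    cases x <;> simp_all

/-- A square bridge diagram is connected if its bipartite incidence graph is
connected (the corresponding link is not split). -/
def SquareBridgeDiagram.Connected {p q : ℕ} (D : SquareBridgeDiagram p q) :
    Prop :=
  D.graph.Connected

/-- At most two rows have their left corner on column `n`. -/
private lemma corner_card₁ {p q : ℕ} (D : SquareBridgeDiagram p q) (n : ℕ) (hn : n < q) :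
    (Finset.univ.filter (fun i => (D.j₁ i : ℕ) = n)).card ≤ 2 := by
  have hsub : Finset.univ.filter (fun i => (D.j₁ i : ℕ) = n) ⊆
      {D.i₁ ⟨n, hn⟩, D.i₂ ⟨n, hn⟩} := by
    intro i hi
    simp only [Finset.mem_filter, Finset.mem_univ, true_and] at hi
    have hj : (⟨n, hn⟩ : Fin q) = D.j₁ i ∨ (⟨n, hn⟩ : Fin q) = D.j₂ i :=
      Or.inl (by simp [Fin.ext_iff, hi])
    have := (D.corner i ⟨n, hn⟩).mp hj
    simpa only [Finset.mem_insert, Finset.mem_singleton] using this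
  exact (Finset.card_le_card hsub).trans
    ((Finset.card_insert_le _ _).trans (by simp))

/-- At most two rows have their right corner on column `n`. -/
private lemma corner_card₂ {p q : ℕ} (D : SquareBridgeDiagram p q) (n : ℕ) (hn : n < q) :
    (Finset.univ.filter (fun i => (D.j₂ i : ℕ) = n)).card ≤ 2 := by
  have hsub : Finset.univ.filter (fun i => (D.j₂ i : ℕ) = n) ⊆
      {D.i₁ ⟨n, hn⟩, D.i₂ ⟨n, hn⟩} := by
    intro i hi
    simp only [Finset.mem_filter, Finset.mem_univ, true_and] at hi
    have hj : (⟨n, hn⟩ : Fin q) = D.j₁ i ∨ (⟨n, hn⟩ : Fin q) = D.j₂ i :=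
      Or.inr (by simp [Fin.ext_iff, hi])
    have := (D.corner i ⟨n, hn⟩).mp hj
    simpa only [Finset.mem_insert, Finset.mem_singleton] using this
  exact (Finset.card_le_card hsub).trans
    ((Finset.card_insert_le _ _).trans (by simp))

private lemma sum_ite_le_two_mul {p : ℕ} (P : Fin p → Prop) [DecidablePred P]
    (c : ℕ) (h : (Finset.univ.filter P).card ≤ 2) :
    (∑ i : Fin p, if P i then c else 0) ≤ 2 * c := by
  rw [← Finset.sum_filter]
  simp only [Finset.sum_const, smul_eq_mul]
  exact Nat.mul_le_mul_right c h

/-- The key combinatorial estimate in part (4) of the main theorem: for a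
connected abstract square bridge diagram of size `(p, q)` with `p ≥ 4` and
`q ≥ 4`, the intersection count satisfies `κ ≤ p·q − p`; i.e. at least `p` of
the `pq` possible bands are omitted when passing from the Seifert surface
`F_{p,q}` to the ribbon `F`. -/
theorem kappa_le_pq_sub_p (p q : ℕ) (hp : 4 ≤ p) (hq : 4 ≤ q)
    (D : SquareBridgeDiagram p q) (hD : D.Connected) :
    D.kappa ≤ p * q - p := by
  classical
  have hj2lt : ∀ i, (D.j₂ i : ℕ) < q := fun i => (D.j₂ i).isLt
  have hj12 : ∀ i, (D.j₁ i : ℕ) < (D.j₂ i : ℕ) := fun i => D.j₁_lt_j₂ i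
  -- the total of κ and the "missing" count is p * q
  have hsum : D.kappa + ∑ i : Fin p,
      ((D.j₁ i : ℕ) + (q - 1 - (D.j₂ i : ℕ))) = p * q := by
    rw [SquareBridgeDiagram.kappa, ← Finset.sum_add_distrib]
    have hq' : ∀ i ∈ (Finset.univ : Finset (Fin p)),
        ((D.j₂ i : ℕ) - (D.j₁ i : ℕ) + 1) +
          ((D.j₁ i : ℕ) + (q - 1 - (D.j₂ i : ℕ))) = q := by
      intro i _
      have h1 := hj2lt i
      have h2 := hj12 i
      omega
    rw [Finset.sum_congr rfl hq']
    simp [Finset.sum_const, mul_comm]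
  -- lower bound for the sum of left ends
  have key1 : 2 * p ≤ (∑ i : Fin p, (D.j₁ i : ℕ)) + 6 := by
    have h0 := corner_card₁ D 0 (by omega)
    have h1 := corner_card₁ D 1 (by omega)
    have hpt : (∑ i : Fin p, (2 : ℕ)) ≤
        ∑ i : Fin p, ((D.j₁ i : ℕ) +
          ((if (D.j₁ i : ℕ) = 0 then 2 else 0) +
           (if (D.j₁ i : ℕ) = 1 then 1 else 0))) := by
      refine Finset.sum_le_sum fun i _ => ?_
      split_ifs <;> omega
    have hb0 := sum_ite_le_two_mul (fun i => (D.j₁ i : ℕ) = 0) 2 h0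
    have hb1 := sum_ite_le_two_mul (fun i => (D.j₁ i : ℕ) = 1) 1 h1
    beta_reduce at hb0 hb1
    simp only [Finset.sum_add_distrib, Finset.sum_const, Finset.card_univ,
      Fintype.card_fin, smul_eq_mul] at hpt
    omega
  -- lower bound for the sum of right gaps
  have key2 : 2 * p ≤ (∑ i : Fin p, (q - 1 - (D.j₂ i : ℕ))) + 6 := by
    have h0 := corner_card₂ D (q - 1) (by omega)
    have h1 := corner_card₂ D (q - 2) (by omega)
    have hpt : (∑ i : Fin p, (2 : ℕ)) ≤
        ∑ i : Fin p, ((q - 1 - (D.j₂ i : ℕ)) +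
          ((if (D.j₂ i : ℕ) = q - 1 then 2 else 0) +
           (if (D.j₂ i : ℕ) = q - 2 then 1 else 0))) := by
      refine Finset.sum_le_sum fun i _ => ?_
      have := hj2lt i
      split_ifs <;> omega
    have hb0 := sum_ite_le_two_mul (fun i => (D.j₂ i : ℕ) = q - 1) 2 h0
    have hb1 := sum_ite_le_two_mul (fun i => (D.j₂ i : ℕ) = q - 2) 1 h1
    beta_reduce at hb0 hb1
    simp only [Finset.sum_add_distrib, Finset.sum_const, Finset.card_univ,
      Fintype.card_fin, smul_eq_mul] at hpt
    omega
  have hmiss : p ≤ ∑ i : Fin p,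
      ((D.j₁ i : ℕ) + (q - 1 - (D.j₂ i : ℕ))) := by
    rw [Finset.sum_add_distrib]
    omega
  omega
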